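/- arXiv:1410.8368 — 3 statements merged into one kernel-verified Lean document; each statement's English description precedes it below -/
import Mathlib

section
/- For every real α ≥ 0, every m ∈ ℕ and every integer I ≥ 0 there exists a constant C = C(α, m, I) > 0 such that for all λ ≠ 0 (the derivative being taken separately on λ > 0 and λ < 0) and all (x,t) ∈ K: |∂^I/∂λ^I φ^α_{(λ,m)}(x,t)| ≤ C · N(x,t)^{2I}. -/
open MeasureTheory Real Set Filter Topology ENNReal NNReal

noncomputable section

namespace LaguerreHypergroup

/-- The measure `dm_α(x,t) = (π Γ(α+1))⁻¹ x^{2α+1} dx dt` on `K = [0,∞) × ℝ`,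
modeled on `ℝ × ℝ` with density vanishing for `x < 0`. -/
def mAlpha (α : ℝ) : Measure (ℝ × ℝ) :=
  (volume : Measure (ℝ × ℝ)).withDensity fun z =>
    ENNReal.ofReal ((π * Real.Gamma (α + 1))⁻¹ * if 0 ≤ z.1 then z.1 ^ (2 * α + 1) else 0)

/-- The homogeneous norm `N(x,t) = (x⁴ + 4t²)^{1/4}`. -/
def hNorm (z : ℝ × ℝ) : ℝ := (z.1 ^ 4 + 4 * z.2 ^ 2) ^ ((1 : ℝ) / 4)

/-- The homogeneous dimension `Q = 2α + 4`. -/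
def Q (α : ℝ) : ℝ := 2 * α + 4

/-- The Laguerre polynomial of degree `m` and order `α`. -/
def laguerreL (α : ℝ) (m : ℕ) (x : ℝ) : ℝ :=
  ∑ k ∈ Finset.range (m + 1),
    Real.Gamma (m + α + 1) /
      (Real.Gamma (k + α + 1) * (m - k).factorial * k.factorial) * (-x) ^ k

/-- The Laguerre function `𝓛_m^α(x) = e^{-x/2} L_m^α(x) / L_m^α(0)`. -/
def laguerreFun (α : ℝ) (m : ℕ) (x : ℝ) : ℝ :=
  Real.exp (-x / 2) * laguerreL α m x / laguerreL α m 0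

/-- The character `φ^α_{(λ,m)}(x,t) = e^{iλt} 𝓛_m^α(|λ| x²)`. -/
def phi (α : ℝ) (lam : ℝ) (m : ℕ) (x t : ℝ) : ℂ :=
  Complex.exp (Complex.I * (lam : ℂ) * (t : ℂ)) * (laguerreFun α m (|lam| * x ^ 2) : ℂ)

/-- The dual quasi-norm `N(λ,m) = 4|λ|(m + (α+1)/2)`. -/
def dualN (α : ℝ) (lam : ℝ) (m : ℕ) : ℝ := 4 * |lam| * ((m : ℝ) + (α + 1) / 2)

/-- The Fourier–Laguerre transform
`f̂(λ,m) = ∫_K φ^α_{(-λ,m)}(x,t) f(x,t) dm_α(x,t)`. -/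
def fourierL (α : ℝ) (f : ℝ × ℝ → ℂ) (lam : ℝ) (m : ℕ) : ℂ :=
  ∫ z, phi α (-lam) m z.1 z.2 * f z ∂(mAlpha α)

/-- The Plancherel measure `γ_α` on `K̂`, modeled on `ℝ × ℕ`:
`∫ Φ dγ_α = Σ_m L_m^α(0) ∫_ℝ Φ(λ,m) |λ|^{α+1} dλ`. -/
def gammaM (α : ℝ) : Measure (ℝ × ℕ) :=
  Measure.sum fun m : ℕ =>
    ((volume : Measure ℝ).withDensity fun lam =>
        ENNReal.ofReal (laguerreL α m 0 * |lam| ^ (α + 1))).map fun lam => (lam, m)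

/-- A `(p,q,s)`-atom centered at the origin. -/
def IsAtom (α p : ℝ) (q : ℝ≥0∞) (s : ℕ) (a : ℝ × ℝ → ℂ) : Prop :=
  MemLp a q (mAlpha α) ∧
  ∃ r > (0 : ℝ),
    (∀ z : ℝ × ℝ, ¬ hNorm z < r → a z = 0) ∧
    eLpNorm a q (mAlpha α) ≤
      mAlpha α {z : ℝ × ℝ | hNorm z < r} ^ (1 / q.toReal - 1 / p) ∧
    ∀ i j : ℕ, i + 2 * j ≤ s →
      ∫ z : ℝ × ℝ, (z.1 : ℂ) ^ i * (z.2 : ℂ) ^ j * a z ∂(mAlpha α) = 0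

/-- `a = 1 - 1/p + ε` in the molecule definition. -/
def molA (p ε : ℝ) : ℝ := 1 - 1 / p + ε

/-- `b = 1 - 1/q + ε` in the molecule definition (`1/∞ = 0`). -/
def molB (q : ℝ≥0∞) (ε : ℝ) : ℝ := 1 - 1 / q.toReal + ε

/-- A `(p,q,s,ε)`-molecule centered at the origin. -/
def IsMolecule (α p : ℝ) (q : ℝ≥0∞) (s : ℕ) (ε : ℝ) (M : ℝ × ℝ → ℂ) : Prop :=
  MemLp M q (mAlpha α) ∧
  MemLp (fun z => (hNorm z ^ (Q α * molB q ε) : ℝ) • M z) q (mAlpha α) ∧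
  ∀ i j : ℕ, i + 2 * j ≤ s →
    Integrable (fun z : ℝ × ℝ => (z.1 : ℂ) ^ i * (z.2 : ℂ) ^ j * M z) (mAlpha α) ∧
    ∫ z : ℝ × ℝ, (z.1 : ℂ) ^ i * (z.2 : ℂ) ^ j * M z ∂(mAlpha α) = 0

/-- The molecular norm `𝔑(M)`. -/
def molNorm (α p : ℝ) (q : ℝ≥0∞) (ε : ℝ) (M : ℝ × ℝ → ℂ) : ℝ :=
  (eLpNorm M q (mAlpha α)).toReal ^ (molA p ε / molB q ε) *
    (eLpNorm (fun z => (hNorm z ^ (Q α * molB q ε) : ℝ) • M z) q (mAlpha α)).toReal ^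
      (1 - molA p ε / molB q ε)

/-- `D^I_λ â(λ,m)`: the Fourier–Laguerre transform of `(x,t) ↦ x^{i₁} t^{i₀} a(x,t)`. -/
def fourierMomentD (α : ℝ) (a : ℝ × ℝ → ℂ) (i₁ i₀ : ℕ) (lam : ℝ) (m : ℕ) : ℂ :=
  ∫ z : ℝ × ℝ, (z.1 : ℂ) ^ i₁ * (z.2 : ℂ) ^ i₀ * a z * phi α (-lam) m z.1 z.2 ∂(mAlpha α)

end LaguerreHypergroup
namespace LaguerreHypergroup

/-- exp(-u/2) * p(u) -/
def Epoly (p : Polynomial ℂ) (u : ℝ) : ℂ := Complex.exp (-(u:ℂ)/2) * p.eval (u:ℂ)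

def Dstep (p : Polynomial ℂ) : Polynomial ℂ := p.derivative - Polynomial.C (1/2) * p

def Dp (p : Polynomial ℂ) : ℕ → Polynomial ℂ
  | 0 => p
  | n+1 => Dstep (Dp p n)

lemma hasDerivAt_epoly (p : Polynomial ℂ) (u : ℝ) :
    HasDerivAt (Epoly p) (Epoly (Dstep p) u) u := by
  have he : HasDerivAt (fun z : ℂ => Complex.exp (-z/2))
      (Complex.exp (-(u:ℂ)/2) * (-1/2)) (u:ℂ) := by
    simpa using ((hasDerivAt_id (u:ℂ)).neg.div_const 2).cexp
  have h1 := (he.mul (p.hasDerivAt (u:ℂ))).comp_ofReal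
  have : Epoly (Dstep p) u = Complex.exp (-(u:ℂ)/2) * (-1/2) * p.eval (u:ℂ)
      + Complex.exp (-(u:ℂ)/2) * p.derivative.eval (u:ℂ) := by
    simp [Epoly, Dstep]; ring
  rw [this]
  exact h1

lemma contDiff_epoly (p : Polynomial ℂ) : ContDiff ℝ ⊤ (Epoly p) := by
  have h1 : ContDiff ℝ ⊤ (fun u : ℝ => Complex.exp (-(u:ℂ)/2)) :=
    Complex.contDiff_exp.comp (Complex.ofRealCLM.contDiff.neg.div_const 2)
  have h2 : ContDiff ℝ ⊤ (fun u : ℝ => p.eval (u:ℂ)) := by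
    have he : (fun u : ℝ => p.eval (u:ℂ))
        = fun u : ℝ => ∑ k ∈ Finset.range (p.natDegree + 1), p.coeff k * (u:ℂ)^k := by
      funext u; rw [Polynomial.eval_eq_sum_range]
    rw [he]
    exact ContDiff.sum fun k _ => contDiff_const.mul (Complex.ofRealCLM.contDiff.pow k)
  exact h1.mul h2

lemma iteratedDeriv_epoly (p : Polynomial ℂ) (n : ℕ) :
    iteratedDeriv n (Epoly p) = Epoly (Dp p n) := by
  induction n with
  | zero => simp [Dp]
  | succ n ih =>
    rw [iteratedDeriv_succ, ih]
    funext u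
    exact (hasDerivAt_epoly (Dp p n) u).deriv

lemma iteratedDeriv_epoly_comp (p : Polynomial ℂ) (c : ℝ) (n : ℕ) (l : ℝ) :
    iteratedDeriv n (fun u : ℝ => Epoly p (c * u)) l = c ^ n • Epoly (Dp p n) (c * l) := by
  have := iteratedDeriv_comp_const_smul (f := Epoly p) (n := n)
    ((contDiff_epoly p).of_le le_top) c
  rw [congrFun this l, iteratedDeriv_epoly]

def Bp (p : Polynomial ℂ) : ℝ :=
  ∑ k ∈ Finset.range (p.natDegree + 1), ‖p.coeff k‖ * 2 ^ k * k.factorial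

lemma Bp_nonneg (p : Polynomial ℂ) : 0 ≤ Bp p :=
  Finset.sum_nonneg fun k _ => by positivity

lemma pow_mul_exp_neg_le (u : ℝ) (hu : 0 ≤ u) (k : ℕ) :
    u ^ k * Real.exp (-u/2) ≤ 2 ^ k * k.factorial := by
  have h1 : (u/2) ^ k / k.factorial ≤ Real.exp (u/2) := by
    refine le_trans ?_ (Real.sum_le_exp_of_nonneg (by positivity) (k+1))
    exact Finset.single_le_sum (f := fun i => (u/2)^i / i.factorial)
      (fun i _ => by positivity) (Finset.self_mem_range_succ k)
  have h1' : (u/2) ^ k ≤ k.factorial * Real.exp (u/2) := by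
    rw [div_le_iff₀ (by positivity)] at h1
    calc (u/2)^k ≤ Real.exp (u/2) * k.factorial := h1
      _ = k.factorial * Real.exp (u/2) := by ring
  have h2 : u ^ k ≤ 2 ^ k * k.factorial * Real.exp (u/2) := by
    have hrw : u ^ k = 2 ^ k * ((u/2)^k) := by rw [div_pow]; field_simp
    rw [hrw]
    calc (2:ℝ) ^ k * (u/2)^k ≤ 2 ^ k * (k.factorial * Real.exp (u/2)) := by gcongr
      _ = 2 ^ k * k.factorial * Real.exp (u/2) := by ring
  calc u ^ k * Real.exp (-u/2) ≤ (2 ^ k * k.factorial * Real.exp (u/2)) * Real.exp (-u/2) :=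
        mul_le_mul_of_nonneg_right h2 (Real.exp_nonneg _)
    _ = 2 ^ k * k.factorial * (Real.exp (u/2) * Real.exp (-u/2)) := by ring
    _ = 2 ^ k * k.factorial := by
        rw [← Real.exp_add]
        have h0 : u / 2 + -u / 2 = 0 := by ring
        rw [h0, Real.exp_zero, mul_one]

lemma norm_epoly_le (p : Polynomial ℂ) (u : ℝ) (hu : 0 ≤ u) : ‖Epoly p u‖ ≤ Bp p := by
  have hnorm : ‖Epoly p u‖ ≤ Real.exp (-u/2) *
      ∑ k ∈ Finset.range (p.natDegree + 1), ‖p.coeff k‖ * u ^ k := by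
    rw [Epoly, norm_mul]
    gcongr
    · exact le_of_eq (by rw [Complex.norm_exp]; norm_num)
    · rw [Polynomial.eval_eq_sum_range]
      refine (norm_sum_le _ _).trans (le_of_eq (Finset.sum_congr rfl fun k _ => ?_))
      rw [norm_mul, norm_pow, Complex.norm_real, Real.norm_of_nonneg hu]
  refine hnorm.trans ?_
  rw [Finset.mul_sum, Bp]
  refine Finset.sum_le_sum fun k _ => ?_
  calc Real.exp (-u/2) * (‖p.coeff k‖ * u ^ k) = ‖p.coeff k‖ * (u ^ k * Real.exp (-u/2)) := by ring
    _ ≤ ‖p.coeff k‖ * (2 ^ k * k.factorial) :=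
        mul_le_mul_of_nonneg_left (pow_mul_exp_neg_le u hu k) (norm_nonneg _)
    _ = ‖p.coeff k‖ * 2 ^ k * k.factorial := by ring

lemma iteratedDeriv_cexp_lin (t : ℝ) (j : ℕ) (l : ℝ) :
    iteratedDeriv j (fun l : ℝ => Complex.exp (Complex.I * l * t)) l
      = (Complex.I * t) ^ j * Complex.exp (Complex.I * l * t) := by
  induction j generalizing l with
  | zero => simp
  | succ j ih =>
    rw [iteratedDeriv_succ]
    have hih : iteratedDeriv j (fun l : ℝ => Complex.exp (Complex.I * l * t))
        = fun l : ℝ => (Complex.I * t) ^ j * Complex.exp (Complex.I * l * t) := funext ih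
    rw [hih]
    have hz : HasDerivAt (fun z : ℂ => Complex.exp (Complex.I * z * t))
        (Complex.I * t * Complex.exp (Complex.I * l * t)) (l:ℂ) := by
      have := (((hasDerivAt_id (l:ℂ)).const_mul Complex.I).mul_const (t:ℂ)).cexp
      simpa [mul_comm, mul_assoc, mul_left_comm] using this
    have h := (hz.comp_ofReal).const_mul ((Complex.I * t) ^ j)
    rw [h.deriv]
    ring

/-- `|∂^I/∂λ^I φ^α_{(λ,m)}(x,t)| ≤ C N(x,t)^{2I}` for `λ ≠ 0`. -/
theorem iteratedDeriv_phi_le (α : ℝ) (hα : 0 ≤ α) (m : ℕ) (I : ℕ) :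
    ∃ C > (0 : ℝ), ∀ (lam : ℝ), lam ≠ 0 → ∀ (x t : ℝ), 0 ≤ x →
      ‖iteratedDeriv I (fun l : ℝ => phi α l m x t) lam‖ ≤ C * hNorm (x, t) ^ (2 * I) := by
  classical
  set pL : Polynomial ℂ := ∑ k ∈ Finset.range (m + 1),
    Polynomial.C ((Real.Gamma (m + α + 1) /
      (Real.Gamma (k + α + 1) * (m - k).factorial * k.factorial) : ℝ) : ℂ)
      * (- Polynomial.X) ^ k with hpL
  set p : Polynomial ℂ := Polynomial.C (((laguerreL α m 0 : ℝ) : ℂ))⁻¹ * pL with hp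
  have hSum0 : 0 ≤ ∑ j ∈ Finset.range (I + 1), (I.choose j : ℝ) * Bp (Dp p (I - j)) :=
    Finset.sum_nonneg fun j _ => mul_nonneg (Nat.cast_nonneg _) (Bp_nonneg _)
  refine ⟨∑ j ∈ Finset.range (I + 1), (I.choose j : ℝ) * Bp (Dp p (I - j)) + 1,
    by linarith, ?_⟩
  intro lam hlam x t hx
  -- the Laguerre function, complexified
  have hL : ∀ u : ℝ, pL.eval (u : ℂ) = ((laguerreL α m u : ℝ) : ℂ) := by
    intro u
    rw [hpL, laguerreL, Polynomial.eval_finset_sum]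
    push_cast
    refine Finset.sum_congr rfl fun k _ => ?_
    simp
  have hEp : ∀ u : ℝ, ((laguerreFun α m u : ℝ) : ℂ) = Epoly p u := by
    intro u
    rw [laguerreFun, Epoly, hp, Polynomial.eval_mul, Polynomial.eval_C, hL]
    push_cast
    ring
  -- sign bookkeeping
  obtain ⟨s, hs1, hsl, hsev⟩ : ∃ s : ℝ, |s| = 1 ∧ s * lam = |lam| ∧
      (∀ᶠ l in 𝓝 lam, |l| = s * l) := by
    rcases hlam.lt_or_gt with h | h
    · refine ⟨-1, by norm_num, by rw [abs_of_neg h]; ring, ?_⟩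
      filter_upwards [Iio_mem_nhds h] with l hl
      rw [abs_of_neg hl]; ring
    · refine ⟨1, by norm_num, by rw [abs_of_pos h]; ring, ?_⟩
      filter_upwards [Ioi_mem_nhds h] with l hl
      rw [abs_of_pos hl]; ring
  set c : ℝ := s * x ^ 2 with hc
  have hev : (fun l : ℝ => phi α l m x t) =ᶠ[𝓝 lam]
      (fun l : ℝ => Complex.exp (Complex.I * (l : ℂ) * (t : ℂ)) * Epoly p (c * l)) := by
    filter_upwards [hsev] with l hl
    have harg : |l| * x ^ 2 = c * l := by rw [hl, hc]; ring
    rw [phi, harg, hEp]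
  rw [hev.iteratedDeriv_eq I]
  set f : ℝ → ℂ := fun l => Complex.exp (Complex.I * (l : ℂ) * (t : ℂ)) with hfdef
  set g : ℝ → ℂ := fun l => Epoly p (c * l) with hgdef
  have hf : ContDiff ℝ ⊤ f :=
    Complex.contDiff_exp.comp
      ((contDiff_const.mul Complex.ofRealCLM.contDiff).mul contDiff_const)
  have hg : ContDiff ℝ ⊤ g :=
    (contDiff_epoly p).comp (contDiff_const.mul contDiff_id)
  have key := norm_iteratedFDeriv_mul_le hf hg lam (le_top : (I : WithTop ℕ∞) ≤ ⊤)
  rw [← norm_iteratedFDeriv_eq_norm_iteratedDeriv]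
  refine key.trans ?_
  -- norm facts
  have hN0 : 0 ≤ hNorm (x, t) := Real.rpow_nonneg (by positivity) _
  have hN4 : hNorm (x, t) ^ 4 = x ^ 4 + 4 * t ^ 2 := by
    rw [hNorm, ← Real.rpow_natCast _ 4, ← Real.rpow_mul (by positivity)]
    norm_num
  have hNsq : (hNorm (x, t) ^ 2) ^ 2 = x ^ 4 + 4 * t ^ 2 := by
    rw [← pow_mul]; norm_num [hN4]
  have ht2 : |t| ≤ hNorm (x, t) ^ 2 := by
    have h1 : t ^ 2 ≤ (hNorm (x, t) ^ 2) ^ 2 := by nlinarith [sq_nonneg x, sq_nonneg t]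
    calc |t| = Real.sqrt (t ^ 2) := (Real.sqrt_sq_eq_abs t).symm
      _ ≤ Real.sqrt ((hNorm (x, t) ^ 2) ^ 2) := Real.sqrt_le_sqrt h1
      _ = |hNorm (x, t) ^ 2| := Real.sqrt_sq_eq_abs _
      _ = hNorm (x, t) ^ 2 := abs_of_nonneg (pow_nonneg hN0 2)
  have hx2 : x ^ 2 ≤ hNorm (x, t) ^ 2 := by
    have h1 : (x ^ 2) ^ 2 ≤ (hNorm (x, t) ^ 2) ^ 2 := by nlinarith [sq_nonneg t]
    calc x ^ 2 = Real.sqrt ((x ^ 2) ^ 2) := (Real.sqrt_sq (by positivity)).symm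
      _ ≤ Real.sqrt ((hNorm (x, t) ^ 2) ^ 2) := Real.sqrt_le_sqrt h1
      _ = |hNorm (x, t) ^ 2| := Real.sqrt_sq_eq_abs _
      _ = hNorm (x, t) ^ 2 := abs_of_nonneg (pow_nonneg hN0 2)
  have hfj : ∀ j : ℕ, ‖iteratedFDeriv ℝ j f lam‖ = |t| ^ j := by
    intro j
    rw [norm_iteratedFDeriv_eq_norm_iteratedDeriv, hfdef, iteratedDeriv_cexp_lin,
      norm_mul, norm_pow]
    have h1 : ‖Complex.I * (t : ℂ)‖ = |t| := by simp
    have h2 : ‖Complex.exp (Complex.I * (lam : ℂ) * (t : ℂ))‖ = 1 := by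
      rw [Complex.norm_exp]
      simp [Complex.mul_re]
    rw [h1, h2, mul_one]
  have hgj : ∀ j : ℕ, ‖iteratedFDeriv ℝ j g lam‖ ≤ (x ^ 2) ^ j * Bp (Dp p j) := by
    intro j
    rw [norm_iteratedFDeriv_eq_norm_iteratedDeriv, hgdef, iteratedDeriv_epoly_comp,
      norm_smul]
    have hcx : |c| = x ^ 2 := by
      rw [hc, abs_mul, hs1, one_mul, abs_of_nonneg (by positivity)]
    have harg : 0 ≤ c * lam := by
      have hcl : c * lam = |lam| * x ^ 2 := by rw [hc, ← hsl]; ring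
      rw [hcl]; positivity
    calc ‖(c ^ j : ℝ)‖ * ‖Epoly (Dp p j) (c * lam)‖
        = (x ^ 2) ^ j * ‖Epoly (Dp p j) (c * lam)‖ := by
          rw [Real.norm_eq_abs, abs_pow, hcx]
      _ ≤ (x ^ 2) ^ j * Bp (Dp p j) :=
          mul_le_mul_of_nonneg_left (norm_epoly_le _ _ harg) (by positivity)
  calc ∑ j ∈ Finset.range (I + 1), (I.choose j : ℝ) * ‖iteratedFDeriv ℝ j f lam‖
        * ‖iteratedFDeriv ℝ (I - j) g lam‖
      ≤ ∑ j ∈ Finset.range (I + 1),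
          (I.choose j : ℝ) * Bp (Dp p (I - j)) * hNorm (x, t) ^ (2 * I) := by
        refine Finset.sum_le_sum fun j hj => ?_
        have hjI : j ≤ I := Nat.lt_succ_iff.mp (Finset.mem_range.mp hj)
        rw [hfj j]
        calc (I.choose j : ℝ) * |t| ^ j * ‖iteratedFDeriv ℝ (I - j) g lam‖
            ≤ (I.choose j : ℝ) * |t| ^ j * ((x ^ 2) ^ (I - j) * Bp (Dp p (I - j))) :=
              mul_le_mul_of_nonneg_left (hgj (I - j)) (by positivity)
          _ = (I.choose j : ℝ) * Bp (Dp p (I - j)) * (|t| ^ j * (x ^ 2) ^ (I - j)) := by ring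
          _ ≤ (I.choose j : ℝ) * Bp (Dp p (I - j)) * hNorm (x, t) ^ (2 * I) := by
              refine mul_le_mul_of_nonneg_left ?_
                (mul_nonneg (Nat.cast_nonneg _) (Bp_nonneg _))
              calc |t| ^ j * (x ^ 2) ^ (I - j)
                  ≤ (hNorm (x, t) ^ 2) ^ j * (hNorm (x, t) ^ 2) ^ (I - j) :=
                    mul_le_mul (pow_le_pow_left₀ (abs_nonneg t) ht2 j)
                      (pow_le_pow_left₀ (by positivity) hx2 _) (by positivity) (by positivity)
                _ = hNorm (x, t) ^ (2 * I) := by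
                    rw [← pow_add, Nat.add_sub_cancel' hjI, ← pow_mul]
    _ = (∑ j ∈ Finset.range (I + 1), (I.choose j : ℝ) * Bp (Dp p (I - j)))
          * hNorm (x, t) ^ (2 * I) := by rw [Finset.sum_mul]
    _ ≤ (∑ j ∈ Finset.range (I + 1), (I.choose j : ℝ) * Bp (Dp p (I - j)) + 1)
          * hNorm (x, t) ^ (2 * I) :=
        mul_le_mul_of_nonneg_right (by linarith) (pow_nonneg hN0 _)

end LaguerreHypergroup
end
end

section
/- Let 0 < p ≤ 1 ≤ q ≤ ∞ with p ≠ q, let s' ≥ s ≥ ⌊Q(1/p − 1)⌋ be integers, and let ε > max{s/Q, 1/p − 1}. Then there is a constant C > 0, depending only on p, q, s, s', ε and α, such that every (p,q,s')-atom a centered at the origin is a (p,q,s,ε)-molecule centered at the origin with molecular norm 𝔑(a) ≤ C. -/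
open MeasureTheory Real Set Filter Topology ENNReal NNReal

noncomputable section

namespace LaguerreHypergroup

lemma hNorm_nonneg (z : ℝ × ℝ) : 0 ≤ hNorm z :=
  Real.rpow_nonneg (by positivity) _

lemma hNorm_lt_iff {r : ℝ} (hr : 0 ≤ r) (z : ℝ × ℝ) :
    hNorm z < r ↔ z.1 ^ 4 + 4 * z.2 ^ 2 < r ^ 4 := by
  have hbase : (0:ℝ) ≤ z.1 ^ 4 + 4 * z.2 ^ 2 := by positivity
  have h1 : ((z.1 ^ 4 + 4 * z.2 ^ 2) ^ ((1:ℝ)/4)) ^ (4:ℕ) = z.1 ^ 4 + 4 * z.2 ^ 2 := by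
    rw [← Real.rpow_natCast (_ ^ ((1:ℝ)/4)) 4, ← Real.rpow_mul hbase]
    norm_num
  constructor
  · intro h
    calc z.1 ^ 4 + 4 * z.2 ^ 2 = (hNorm z) ^ (4:ℕ) := h1.symm
      _ < r ^ (4:ℕ) := by
          exact pow_lt_pow_left₀ h (hNorm_nonneg z) (by norm_num)
      _ = r ^ 4 := by norm_num
  · intro h
    have h2 : hNorm z ^ (4:ℕ) < r ^ (4:ℕ) := by
      show ((z.1 ^ 4 + 4 * z.2 ^ 2) ^ ((1:ℝ)/4)) ^ (4:ℕ) < r ^ (4:ℕ)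
      rw [h1]; exact_mod_cast h
    exact (pow_lt_pow_iff_left₀ (hNorm_nonneg z) hr (by norm_num : (4:ℕ) ≠ 0)).mp h2

lemma continuous_hNorm : Continuous hNorm := by
  apply Continuous.rpow_const (by continuity)
  intro z; right; norm_num

lemma measurableSet_ball (r : ℝ) : MeasurableSet {z : ℝ × ℝ | hNorm z < r} :=
  measurableSet_lt continuous_hNorm.measurable measurable_const

lemma mem_ball_bounds {r : ℝ} (hr : 0 < r) {z : ℝ × ℝ} (hz : hNorm z < r) :
    |z.1| < r ∧ |z.2| < r ^ 2 / 2 := by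
  rw [hNorm_lt_iff hr.le] at hz
  have h1 : z.1 ^ 2 < r ^ 2 := by nlinarith [sq_nonneg z.1, sq_nonneg z.2, sq_nonneg r, pow_pos hr 4]
  have h2 : z.2 ^ 2 < (r ^ 2 / 2) ^ 2 := by nlinarith [sq_nonneg z.1, sq_nonneg z.2]
  exact ⟨abs_lt_of_sq_lt_sq h1 hr.le, abs_lt_of_sq_lt_sq h2 (by positivity)⟩


lemma mAlpha_ball_lower (hα : 0 ≤ α) {r : ℝ} (hr : 0 < r) :
    ENNReal.ofReal ((π * Real.Gamma (α + 1))⁻¹ * (4:ℝ) ^ (-(2*α+1)) / 8 * r ^ Q α)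
      ≤ mAlpha α {z : ℝ × ℝ | hNorm z < r} := by
  set K : ℝ := (π * Real.Gamma (α + 1))⁻¹ with hKdef
  have hK : 0 < K := inv_pos.2 (mul_pos Real.pi_pos (Real.Gamma_pos_of_pos (by linarith)))
  set S : Set (ℝ × ℝ) := Set.Ico (r/4) (r/2) ×ˢ Set.Ioo (-(r^2/4)) (r^2/4) with hSdef
  have hS : MeasurableSet S := measurableSet_Ico.prod measurableSet_Ioo
  have hsub : S ⊆ {z : ℝ × ℝ | hNorm z < r} := by
    rintro z ⟨hx, ht⟩
    rw [Set.mem_setOf_eq, hNorm_lt_iff hr.le]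
    have hx4 : z.1 ^ 4 < (r/2) ^ 4 :=
      pow_lt_pow_left₀ hx.2 (le_trans (by positivity) hx.1) (by norm_num)
    have ht2 : z.2 ^ 2 < (r^2/4) ^ 2 := sq_lt_sq' ht.1 ht.2
    nlinarith [pow_pos hr 4]
  have hvolS : (volume : Measure (ℝ × ℝ)) S = ENNReal.ofReal (r/4) * ENNReal.ofReal (r^2/2) := by
    rw [hSdef, Measure.volume_eq_prod ℝ ℝ, Measure.prod_prod, Real.volume_Ico, Real.volume_Ioo,
      show r/2 - r/4 = r/4 by ring, show r^2/4 - -(r^2/4) = r^2/2 by ring]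
  have hmeasS : ENNReal.ofReal (K * (r/4) ^ (2*α+1)) * (volume : Measure (ℝ × ℝ)) S
      ≤ mAlpha α S := by
    rw [mAlpha, withDensity_apply _ hS, ← setLIntegral_const]
    refine setLIntegral_mono' hS ?_
    rintro z ⟨hx, _⟩
    have hx0 : (0:ℝ) ≤ z.1 := le_trans (by positivity) hx.1
    rw [if_pos hx0]
    exact ENNReal.ofReal_le_ofReal (mul_le_mul_of_nonneg_left
      (Real.rpow_le_rpow (by positivity) hx.1 (by linarith)) hK.le)
  have key : K * (r/4) ^ (2*α+1) * ((r/4) * (r^2/2)) = K * (4:ℝ) ^ (-(2*α+1)) / 8 * r ^ Q α := by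
    have h4 : ((r:ℝ)/4) ^ (2*α+1) = r ^ (2*α+1) * (4:ℝ) ^ (-(2*α+1)) := by
      rw [Real.div_rpow hr.le (by norm_num), Real.rpow_neg (by norm_num)]
      ring
    have e2 : (r:ℝ) ^ (3:ℕ) = r ^ ((3:ℕ):ℝ) := (Real.rpow_natCast r 3).symm
    have e3 : r ^ (2*α+1) * r ^ ((3:ℕ):ℝ) = r ^ Q α := by
      rw [← Real.rpow_add hr]
      norm_num [Q]
      ring_nf
    calc K * (r/4) ^ (2*α+1) * ((r/4) * (r^2/2))
        = K * (4:ℝ) ^ (-(2*α+1)) / 8 * (r ^ (2*α+1) * r ^ (3:ℕ)) := by rw [h4]; ring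
      _ = K * (4:ℝ) ^ (-(2*α+1)) / 8 * r ^ Q α := by rw [e2, e3]
  calc ENNReal.ofReal (K * (4:ℝ) ^ (-(2*α+1)) / 8 * r ^ Q α)
      = ENNReal.ofReal (K * (r/4) ^ (2*α+1)) * ((volume : Measure (ℝ × ℝ)) S) := by
        rw [hvolS, ← ENNReal.ofReal_mul (by positivity), ← ENNReal.ofReal_mul
          (by have := Real.rpow_nonneg (by positivity : (0:ℝ) ≤ r/4) (2*α+1); positivity),
          ← key, mul_assoc]
    _ ≤ mAlpha α S := hmeasS
    _ ≤ mAlpha α {z : ℝ × ℝ | hNorm z < r} := measure_mono hsub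

lemma mAlpha_ball_lt_top (hα : 0 ≤ α) {r : ℝ} (hr : 0 < r) :
    mAlpha α {z : ℝ × ℝ | hNorm z < r} < ∞ := by
  set K : ℝ := (π * Real.Gamma (α + 1))⁻¹ with hKdef
  have hK : 0 < K := inv_pos.2 (mul_pos Real.pi_pos (Real.Gamma_pos_of_pos (by linarith)))
  set T : Set (ℝ × ℝ) := Set.Ioo (-r) r ×ˢ Set.Ioo (-(r^2/2)) (r^2/2) with hTdef
  have hT : MeasurableSet T := measurableSet_Ioo.prod measurableSet_Ioo
  have hsub : {z : ℝ × ℝ | hNorm z < r} ⊆ T := by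
    intro z hz
    obtain ⟨h1, h2⟩ := mem_ball_bounds hr hz
    exact ⟨abs_lt.1 h1, abs_lt.1 h2⟩
  have hub : mAlpha α T ≤ ENNReal.ofReal (K * r ^ (2*α+1)) * (volume : Measure (ℝ × ℝ)) T := by
    rw [mAlpha, withDensity_apply _ hT, ← setLIntegral_const]
    refine setLIntegral_mono' hT ?_
    rintro z ⟨hx, _⟩
    by_cases hx0 : (0:ℝ) ≤ z.1
    · rw [if_pos hx0]
      exact ENNReal.ofReal_le_ofReal (mul_le_mul_of_nonneg_left
        (Real.rpow_le_rpow hx0 hx.2.le (by linarith)) hK.le)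
    · rw [if_neg hx0, mul_zero]
      exact ENNReal.ofReal_le_ofReal (by positivity)
  refine lt_of_le_of_lt (le_trans (measure_mono hsub) hub) ?_
  rw [hTdef, Measure.volume_eq_prod ℝ ℝ, Measure.prod_prod]
  exact ENNReal.mul_lt_top ENNReal.ofReal_lt_top
    (ENNReal.mul_lt_top (by simp [Real.volume_Ioo])
      (by simp [Real.volume_Ioo]))


/-- every `(p,q,s')`-atom is a `(p,q,s,ε)`-molecule with `𝔑(a) ≤ C`. -/
theorem atom_isMolecule (α p : ℝ) (q : ℝ≥0∞) (hα : 0 ≤ α) (hp : 0 < p) (hp1 : p ≤ 1)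
    (hq : 1 ≤ q) (hpq : ENNReal.ofReal p ≠ q) (s s' : ℕ)
    (hs : ⌊Q α * (1 / p - 1)⌋ ≤ (s : ℤ)) (hss' : s ≤ s') (ε : ℝ)
    (hε : max ((s : ℝ) / Q α) (1 / p - 1) < ε) :
    ∃ C > (0 : ℝ), ∀ a : ℝ × ℝ → ℂ, IsAtom α p q s' a →
      IsMolecule α p q s ε a ∧ molNorm α p q ε a ≤ C := by
  classical
  have hQ : (0:ℝ) < Q α := by unfold Q; linarith
  have hK : 0 < (π * Real.Gamma (α + 1))⁻¹ :=
    inv_pos.2 (mul_pos Real.pi_pos (Real.Gamma_pos_of_pos (by linarith)))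
  set c₁ : ℝ := (π * Real.Gamma (α + 1))⁻¹ * (4:ℝ) ^ (-(2*α+1)) / 8 with hc₁def
  have hc₁ : 0 < c₁ := by
    apply div_pos (mul_pos hK (Real.rpow_pos_of_pos (by norm_num) _)) (by norm_num)
  -- facts about exponents
  have hεs : (s:ℝ) / Q α < ε := lt_of_le_of_lt (le_max_left _ _) hε
  have hεp : 1 / p - 1 < ε := lt_of_le_of_lt (le_max_right _ _) hε
  have hεpos : 0 < ε := lt_of_le_of_lt (by positivity) hεs
  have hq'le1 : 1 / q.toReal ≤ 1 := by
    rcases eq_or_ne q ∞ with h | h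
    · simp [h]
    · have h1 : 1 ≤ q.toReal := by
        rw [← ENNReal.toReal_one]; exact ENNReal.toReal_mono h hq
      rw [div_le_one (by linarith)]; exact h1
  have hq'lt : 1 / q.toReal < 1 / p := by
    rcases eq_or_ne q ∞ with h | h
    · simpa [h] using one_div_pos.mpr hp
    · have h1 : 1 ≤ q.toReal := by
        rw [← ENNReal.toReal_one]; exact ENNReal.toReal_mono h hq
      rcases lt_or_eq_of_le h1 with h2 | h2
      · calc 1 / q.toReal < 1 := by rw [div_lt_one (by linarith)]; exact h2
          _ ≤ 1 / p := by
              rw [le_div_iff₀ hp]; linarith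
      · have hq1 : q = 1 := by rw [← ENNReal.toReal_eq_one_iff, ← h2]
        have hplt : p < 1 := by
          rcases lt_or_eq_of_le hp1 with h3 | h3
          · exact h3
          · exact absurd (by rw [h3, hq1]; exact ENNReal.ofReal_one) hpq
        rw [← h2]
        simpa using one_lt_one_div hp hplt
  have hb : 0 < molB q ε := by unfold molB; linarith
  have ha : 0 < molA p ε := by unfold molA; linarith
  have hab : molA p ε < molB q ε := by unfold molA molB; linarith
  set κ : ℝ := 1 / q.toReal - 1 / p with hκdef
  have hκneg : κ < 0 := by simp only [hκdef]; linarith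
  set E : ℝ := Q α * molB q ε with hEdef
  have hE : 0 < E := mul_pos hQ hb
  set θa : ℝ := molA p ε / molB q ε with hθadef
  set θb : ℝ := 1 - molA p ε / molB q ε with hθbdef
  have hθa : 0 ≤ θa := div_nonneg ha.le hb.le
  have hθb : 0 ≤ θb := by
    rw [hθbdef, sub_nonneg, div_le_one hb]; exact hab.le
  refine ⟨c₁ ^ κ, Real.rpow_pos_of_pos hc₁ _, ?_⟩
  rintro a ⟨hmem, r, hr, hsupp, hbound, hmom⟩
  set B : Set (ℝ × ℝ) := {z : ℝ × ℝ | hNorm z < r} with hBdef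
  have hBmeas : MeasurableSet B := measurableSet_ball r
  have hBfin : mAlpha α B < ∞ := mAlpha_ball_lt_top hα hr
  have hlow : ENNReal.ofReal (c₁ * r ^ Q α) ≤ mAlpha α B := by
    have := mAlpha_ball_lower hα hr (α := α)
    rwa [hc₁def]
  have hcr : (0:ℝ) < c₁ * r ^ Q α := mul_pos hc₁ (Real.rpow_pos_of_pos hr _)
  -- eLpNorm bound for a
  have hA : eLpNorm a q (mAlpha α) ≤ ENNReal.ofReal ((c₁ * r ^ Q α) ^ κ) := by
    refine hbound.trans ?_
    rw [← ENNReal.ofReal_rpow_of_pos hcr, hκdef]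
    rw [show (1/q.toReal - 1/p : ℝ) = -(-(1/q.toReal - 1/p)) by ring,
      ENNReal.rpow_neg _ (-(1/q.toReal - 1/p)), ENNReal.rpow_neg _ (-(1/q.toReal - 1/p))]
    exact ENNReal.inv_le_inv.2 (ENNReal.rpow_le_rpow hlow
      (by linarith : (0:ℝ) ≤ -(1/q.toReal - 1/p)))
  -- the weighted function
  set f₂ : (ℝ × ℝ) → ℂ := fun z => (hNorm z ^ E : ℝ) • a z with hf₂def
  have hcontN : Continuous fun z : ℝ × ℝ => hNorm z ^ E :=
    continuous_hNorm.rpow_const (fun z => Or.inr hE.le)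
  have hf₂m : AEStronglyMeasurable f₂ (mAlpha α) :=
    (hcontN.aestronglyMeasurable).smul hmem.1
  have hpt : ∀ z : ℝ × ℝ, ‖f₂ z‖ ≤ ‖((r ^ E : ℝ) : ℝ) • a z‖ := by
    intro z
    rw [hf₂def, norm_smul, norm_smul, Real.norm_eq_abs, Real.norm_eq_abs,
      abs_of_nonneg (Real.rpow_nonneg (hNorm_nonneg z) _),
      abs_of_nonneg (Real.rpow_nonneg hr.le _)]
    by_cases hz : hNorm z < r
    · exact mul_le_mul_of_nonneg_right
        (Real.rpow_le_rpow (hNorm_nonneg z) hz.le hE.le) (norm_nonneg _)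
    · rw [hsupp z hz]; simp
  have hpt' : ∀ z : ℝ × ℝ, ‖f₂ z‖ ≤ r ^ E * ‖a z‖ := fun z =>
    (hpt z).trans (le_of_eq (by
      rw [norm_smul, Real.norm_eq_abs, abs_of_nonneg (Real.rpow_nonneg hr.le _)]))
  have hmem₂ : MemLp f₂ q (mAlpha α) :=
    MemLp.of_le_mul hmem hf₂m (Eventually.of_forall hpt')
  have hB2 : eLpNorm f₂ q (mAlpha α) ≤ ENNReal.ofReal (r ^ E) * eLpNorm a q (mAlpha α) := by
    have h1 : eLpNorm f₂ q (mAlpha α) ≤ eLpNorm (((r ^ E : ℝ)) • a) q (mAlpha α) :=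
      eLpNorm_mono_ae (Eventually.of_forall hpt)
    rwa [eLpNorm_const_smul, Real.enorm_eq_ofReal (Real.rpow_nonneg hr.le _)] at h1
  -- toReal bounds
  have hX : (eLpNorm a q (mAlpha α)).toReal ≤ (c₁ * r ^ Q α) ^ κ :=
    ENNReal.toReal_le_of_le_ofReal (Real.rpow_nonneg hcr.le _) hA
  have hY : (eLpNorm f₂ q (mAlpha α)).toReal ≤ r ^ E * (c₁ * r ^ Q α) ^ κ := by
    refine ENNReal.toReal_le_of_le_ofReal
      (mul_nonneg (Real.rpow_nonneg hr.le _) (Real.rpow_nonneg hcr.le _)) ?_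
    refine hB2.trans ?_
    rw [ENNReal.ofReal_mul (Real.rpow_nonneg hr.le _)]
    exact mul_le_mul_right hA _
  -- moments
  have hmoments : ∀ i j : ℕ, i + 2 * j ≤ s →
      Integrable (fun z : ℝ × ℝ => (z.1 : ℂ) ^ i * (z.2 : ℂ) ^ j * a z) (mAlpha α) ∧
      ∫ z : ℝ × ℝ, (z.1 : ℂ) ^ i * (z.2 : ℂ) ^ j * a z ∂(mAlpha α) = 0 := by
    intro i j hij
    have hfinM : IsFiniteMeasure ((mAlpha α).restrict B) :=
      ⟨by rw [Measure.restrict_apply_univ]; exact hBfin⟩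
    have hInt_a : Integrable a ((mAlpha α).restrict B) := (hmem.restrict B).integrable hq
    have hpolym : AEStronglyMeasurable (fun z : ℝ × ℝ => (z.1 : ℂ) ^ i * (z.2 : ℂ) ^ j)
        ((mAlpha α).restrict B) := Continuous.aestronglyMeasurable (by fun_prop)
    have hbd : ∀ᵐ z ∂((mAlpha α).restrict B),
        ‖(z.1 : ℂ) ^ i * (z.2 : ℂ) ^ j‖ ≤ r ^ i * (r ^ 2 / 2) ^ j := by
      filter_upwards [self_mem_ae_restrict hBmeas] with z hz
      obtain ⟨h1, h2⟩ := mem_ball_bounds hr hz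
      rw [norm_mul, norm_pow, norm_pow, Complex.norm_real, Complex.norm_real,
        Real.norm_eq_abs, Real.norm_eq_abs]
      exact mul_le_mul (pow_le_pow_left₀ (abs_nonneg _) h1.le i)
        (pow_le_pow_left₀ (abs_nonneg _) h2.le j) (by positivity) (by positivity)
    have hIntOn : Integrable (fun z : ℝ × ℝ => (z.1 : ℂ) ^ i * (z.2 : ℂ) ^ j * a z)
        ((mAlpha α).restrict B) := Integrable.bdd_mul hInt_a hpolym hbd
    have hsupF : Function.support (fun z : ℝ × ℝ => (z.1 : ℂ) ^ i * (z.2 : ℂ) ^ j * a z) ⊆ B :=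
      Function.support_subset_iff'.2 fun z hz => by rw [hsupp z hz, mul_zero]
    constructor
    · rw [← Set.indicator_eq_self.2 hsupF, integrable_indicator_iff hBmeas]
      exact hIntOn
    · exact hmom i j (le_trans hij hss')
  refine ⟨⟨hmem, hmem₂, hmoments⟩, ?_⟩
  -- molecular norm bound
  have hexp : Q α * κ + E * θb = 0 := by
    have hbne : molB q ε ≠ 0 := ne_of_gt hb
    have key2 : molB q ε * (molA p ε / molB q ε) = molA p ε := by
      rw [mul_comm, div_mul_cancel₀ _ hbne]
    have key3 : Q α * molB q ε * (1 - molA p ε / molB q ε)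
        = Q α * molB q ε - Q α * molA p ε := by
      rw [mul_sub, mul_one, mul_assoc, key2]
    rw [hκdef, hEdef, hθbdef, key3]
    unfold molA molB
    ring
  have hfinal : ((c₁ * r ^ Q α) ^ κ) ^ θa * (r ^ E * (c₁ * r ^ Q α) ^ κ) ^ θb = c₁ ^ κ := by
    have hApos : (0:ℝ) < (c₁ * r ^ Q α) ^ κ := Real.rpow_pos_of_pos hcr κ
    rw [Real.mul_rpow (Real.rpow_nonneg hr.le E) hApos.le,
      show ((c₁ * r ^ Q α) ^ κ) ^ θa * ((r ^ E) ^ θb * ((c₁ * r ^ Q α) ^ κ) ^ θb)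
        = ((c₁ * r ^ Q α) ^ κ) ^ θa * ((c₁ * r ^ Q α) ^ κ) ^ θb * (r ^ E) ^ θb by ring,
      ← Real.rpow_add hApos, show θa + θb = 1 by rw [hθadef, hθbdef]; ring, Real.rpow_one,
      Real.mul_rpow hc₁.le (Real.rpow_nonneg hr.le _),
      ← Real.rpow_mul hr.le, ← Real.rpow_mul hr.le, mul_assoc, ← Real.rpow_add hr, hexp,
      Real.rpow_zero, mul_one]
  calc molNorm α p q ε a
      = (eLpNorm a q (mAlpha α)).toReal ^ θa * (eLpNorm f₂ q (mAlpha α)).toReal ^ θb := rfl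
    _ ≤ ((c₁ * r ^ Q α) ^ κ) ^ θa * (r ^ E * (c₁ * r ^ Q α) ^ κ) ^ θb := by
        apply mul_le_mul (Real.rpow_le_rpow ENNReal.toReal_nonneg hX hθa)
          (Real.rpow_le_rpow ENNReal.toReal_nonneg hY hθb)
          (Real.rpow_nonneg ENNReal.toReal_nonneg _)
          (Real.rpow_nonneg (Real.rpow_nonneg hcr.le _) _)
    _ = c₁ ^ κ := hfinal


end LaguerreHypergroup
end
end

section
/- There exists a constant C > 0, depending only on α, such that for every R > 0: γ_α({(λ,m) ∈ K̂ : N(λ,m) < R}) ≤ C · R^{Q/2}. -/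
open MeasureTheory Real Set Filter Topology ENNReal NNReal

noncomputable section

namespace LaguerreHypergroup

private lemma laguerreL_zero_eq (α : ℝ) (m : ℕ) :
    laguerreL α m 0 = Real.Gamma (m + α + 1) / (Real.Gamma (α + 1) * m.factorial) := by
  unfold laguerreL
  rw [Finset.sum_eq_single 0]
  · simp
  · intro k _ hk0
    simp [zero_pow hk0]
  · simp

private lemma gammaRatio_le (α : ℝ) (hα : 0 ≤ α) (m : ℕ) :
    Real.Gamma (m + α + 1) / (Real.Gamma (α + 1) * m.factorial) ≤ ((m : ℝ) + 1) ^ (⌈α⌉₊) := by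
  set n := ⌈α⌉₊ with hn
  have hαn : α ≤ (n : ℝ) := Nat.le_ceil α
  induction m with
  | zero =>
    have hΓpos : 0 < Real.Gamma (α + 1) := Real.Gamma_pos_of_pos (by linarith)
    simp [div_self hΓpos.ne']
  | succ m ih =>
    have hΓpos : 0 < Real.Gamma (α + 1) := Real.Gamma_pos_of_pos (by linarith)
    have hΓmpos : 0 < Real.Gamma ((m : ℝ) + α + 1) := Real.Gamma_pos_of_pos (by positivity)
    have hm1 : (0 : ℝ) < (m : ℝ) + 1 := by positivity
    have hfp : (0 : ℝ) < (m.factorial : ℝ) := by positivity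
    rw [Nat.factorial_succ]
    push_cast
    have hrec : Real.Gamma ((m : ℝ) + 1 + α + 1)
        = ((m : ℝ) + α + 1) * Real.Gamma ((m : ℝ) + α + 1) := by
      have h : (m : ℝ) + 1 + α + 1 = ((m : ℝ) + α + 1) + 1 := by ring
      rw [h, Real.Gamma_add_one (by positivity)]
    rw [hrec]
    -- key Bernoulli-type inequality
    have key : ((m : ℝ) + (n : ℝ) + 1) * ((m : ℝ) + 1) ^ n
        ≤ ((m : ℝ) + 1 + 1) ^ n * ((m : ℝ) + 1) := by
      rw [show (m : ℝ) + 1 + 1 = (m : ℝ) + 2 from by ring]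
      have hx : (-2 : ℝ) ≤ 1 / ((m : ℝ) + 1) := by
        have h0 : (0 : ℝ) ≤ 1 / ((m : ℝ) + 1) := by positivity
        linarith
      have hb := one_add_mul_le_pow hx n
      have h1 : (1 : ℝ) + 1 / ((m : ℝ) + 1) = ((m : ℝ) + 2) / ((m : ℝ) + 1) := by
        field_simp
        ring
      have hb' : ((m : ℝ) + (n : ℝ) + 1) / ((m : ℝ) + 1)
          ≤ ((m : ℝ) + 2) ^ n / ((m : ℝ) + 1) ^ n := by
        calc ((m : ℝ) + (n : ℝ) + 1) / ((m : ℝ) + 1)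
            = 1 + (n : ℝ) * (1 / ((m : ℝ) + 1)) := by field_simp; ring
          _ ≤ (1 + 1 / ((m : ℝ) + 1)) ^ n := hb
          _ = ((m : ℝ) + 2) ^ n / ((m : ℝ) + 1) ^ n := by rw [h1, div_pow]
      rw [div_le_div_iff₀ hm1 (pow_pos hm1 n)] at hb'
      linarith
    have ih' : Real.Gamma ((m : ℝ) + α + 1)
        ≤ ((m : ℝ) + 1) ^ n * (Real.Gamma (α + 1) * m.factorial) :=
      (div_le_iff₀ (by positivity)).mp ih
    rw [div_le_iff₀ (by positivity)]
    have h2 : ((m : ℝ) + α + 1) * Real.Gamma ((m : ℝ) + α + 1)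
        ≤ ((m : ℝ) + (n : ℝ) + 1) * Real.Gamma ((m : ℝ) + α + 1) := by
      apply mul_le_mul_of_nonneg_right (by linarith) hΓmpos.le
    have h3 : ((m : ℝ) + (n : ℝ) + 1) * Real.Gamma ((m : ℝ) + α + 1)
        ≤ ((m : ℝ) + (n : ℝ) + 1) * (((m : ℝ) + 1) ^ n * (Real.Gamma (α + 1) * m.factorial)) :=
      mul_le_mul_of_nonneg_left ih' (by positivity)
    have h4 := mul_le_mul_of_nonneg_right key
      (by positivity : (0 : ℝ) ≤ Real.Gamma (α + 1) * m.factorial)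
    nlinarith [h2, h3, h4]

private lemma laguerreL_zero_le (α : ℝ) (hα : 0 ≤ α) (m : ℕ) :
    laguerreL α m 0 ≤ ((m : ℝ) + 1) ^ (⌈α⌉₊) := by
  rw [laguerreL_zero_eq]; exact gammaRatio_le α hα m

private lemma laguerreL_zero_nonneg (α : ℝ) (hα : 0 ≤ α) (m : ℕ) :
    0 ≤ laguerreL α m 0 := by
  rw [laguerreL_zero_eq]
  have h1 : 0 < Real.Gamma ((m : ℝ) + α + 1) := Real.Gamma_pos_of_pos (by positivity)
  have h2 : 0 < Real.Gamma (α + 1) := Real.Gamma_pos_of_pos (by linarith)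
  positivity

/-- `γ_α({N(λ,m) < R}) ≤ C R^{Q/2}`. -/
theorem gammaM_ball_le (α : ℝ) (hα : 0 ≤ α) :
    ∃ C > (0 : ℝ), ∀ R : ℝ, 0 < R →
      gammaM α {lm : ℝ × ℕ | dualN α lm.1 lm.2 < R} ≤
        ENNReal.ofReal (C * R ^ (Q α / 2)) := by
  set n := ⌈α⌉₊ with hn
  have hn1 : (n : ℝ) < α + 1 := Nat.ceil_lt_add_one hα
  set p : ℝ := (n : ℝ) - α - 2 with hp
  have hplt : p < -1 := by rw [hp]; linarith
  have hsum : Summable (fun m : ℕ => ((m : ℝ) + 1) ^ p) := by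
    have h := (Real.summable_nat_rpow (p := p)).mpr hplt
    have h3 := (summable_nat_add_iff (f := fun k : ℕ => (k : ℝ) ^ p) 1).mpr h
    simpa using h3
  set S : ℝ := ∑' m : ℕ, ((m : ℝ) + 1) ^ p with hS
  have hS0 : 0 ≤ S := tsum_nonneg fun m => by positivity
  refine ⟨2 * S + 1, by linarith, ?_⟩
  intro R hR
  have hQ : Q α / 2 = α + 2 := by unfold Q; ring
  rw [hQ]
  have hRp : 0 < R ^ (α + 2) := Real.rpow_pos_of_pos hR _
  have hmeasf : Measurable fun lm : ℝ × ℕ => dualN α lm.1 lm.2 := by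
    unfold dualN
    fun_prop
  have hmeas : MeasurableSet {lm : ℝ × ℕ | dualN α lm.1 lm.2 < R} :=
    measurableSet_lt hmeasf measurable_const
  rw [gammaM, Measure.sum_apply _ hmeas]
  have hterm : ∀ m : ℕ,
      (((volume : Measure ℝ).withDensity fun lam =>
          ENNReal.ofReal (laguerreL α m 0 * |lam| ^ (α + 1))).map fun lam => (lam, m))
        {lm : ℝ × ℕ | dualN α lm.1 lm.2 < R}
      ≤ ENNReal.ofReal (2 * R ^ (α + 2) * ((m : ℝ) + 1) ^ p) := by
    intro m
    set c : ℝ := (m : ℝ) + (α + 1) / 2 with hc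
    have hcpos : 0 < c := by rw [hc]; positivity
    set r : ℝ := R / (4 * c) with hrdef
    have hrpos : 0 < r := by rw [hrdef]; positivity
    rw [Measure.map_apply (measurable_prodMk_right (β := ℕ)) hmeas]
    have hset : ((fun lam : ℝ => (lam, m)) ⁻¹' {lm : ℝ × ℕ | dualN α lm.1 lm.2 < R})
        = Ioo (-r) r := by
      ext lam
      simp only [mem_preimage, mem_setOf_eq, mem_Ioo, dualN]
      rw [← abs_lt, hrdef, lt_div_iff₀ (by positivity),
        show |lam| * (4 * c) = 4 * |lam| * c from by ring, hc]
    rw [hset, withDensity_apply _ measurableSet_Ioo]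
    have hptwise : ∀ lam ∈ Ioo (-r) r,
        ENNReal.ofReal (laguerreL α m 0 * |lam| ^ (α + 1))
          ≤ ENNReal.ofReal (((m : ℝ) + 1) ^ n * r ^ (α + 1)) := by
      intro lam hlam
      apply ENNReal.ofReal_le_ofReal
      have habs : |lam| ≤ r := le_of_lt (abs_lt.mpr ⟨hlam.1, hlam.2⟩)
      have h1 : |lam| ^ (α + 1) ≤ r ^ (α + 1) :=
        Real.rpow_le_rpow (abs_nonneg _) habs (by linarith)
      exact mul_le_mul (laguerreL_zero_le α hα m) h1
        (Real.rpow_nonneg (abs_nonneg _) _) (by positivity)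
    calc ∫⁻ lam in Ioo (-r) r, ENNReal.ofReal (laguerreL α m 0 * |lam| ^ (α + 1))
        ≤ ∫⁻ _ in Ioo (-r) r, ENNReal.ofReal (((m : ℝ) + 1) ^ n * r ^ (α + 1)) :=
          setLIntegral_mono measurable_const hptwise
      _ = ENNReal.ofReal (((m : ℝ) + 1) ^ n * r ^ (α + 1)) * volume (Ioo (-r) r) :=
          setLIntegral_const _ _
      _ = ENNReal.ofReal (((m : ℝ) + 1) ^ n * r ^ (α + 1)) * ENNReal.ofReal (2 * r) := by
          rw [Real.volume_Ioo]; congr 1; ring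
      _ = ENNReal.ofReal (((m : ℝ) + 1) ^ n * r ^ (α + 1) * (2 * r)) :=
          (ENNReal.ofReal_mul (by positivity)).symm
      _ ≤ ENNReal.ofReal (2 * R ^ (α + 2) * ((m : ℝ) + 1) ^ p) := by
          apply ENNReal.ofReal_le_ofReal
          have hm1 : (0 : ℝ) < (m : ℝ) + 1 := by positivity
          have hra : r ^ (α + 1) * r = r ^ (α + 2) := by
            rw [← Real.rpow_add_one hrpos.ne' (α + 1)]
            ring_nf
          have hrR : r ≤ R / ((m : ℝ) + 1) := by
            rw [hrdef]
            apply div_le_div_of_nonneg_left hR.le hm1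
            rw [hc]; linarith
          have hr2 : r ^ (α + 2) ≤ (R / ((m : ℝ) + 1)) ^ (α + 2) :=
            Real.rpow_le_rpow hrpos.le hrR (by linarith)
          have hdiv : (R / ((m : ℝ) + 1)) ^ (α + 2)
              = R ^ (α + 2) / ((m : ℝ) + 1) ^ (α + 2) :=
            Real.div_rpow hR.le hm1.le _
          have hpowp : ((m : ℝ) + 1) ^ n / ((m : ℝ) + 1) ^ (α + 2) = ((m : ℝ) + 1) ^ p := by
            rw [← Real.rpow_natCast ((m : ℝ) + 1) n, ← Real.rpow_sub hm1, hp]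
            congr 1; ring
          calc ((m : ℝ) + 1) ^ n * r ^ (α + 1) * (2 * r)
              = 2 * (((m : ℝ) + 1) ^ n * (r ^ (α + 1) * r)) := by ring
            _ = 2 * (((m : ℝ) + 1) ^ n * r ^ (α + 2)) := by rw [hra]
            _ ≤ 2 * (((m : ℝ) + 1) ^ n * (R ^ (α + 2) / ((m : ℝ) + 1) ^ (α + 2))) := by
                have := mul_le_mul_of_nonneg_left (hr2.trans_eq hdiv)
                  (by positivity : (0 : ℝ) ≤ ((m : ℝ) + 1) ^ n)
                linarith
            _ = 2 * R ^ (α + 2) * (((m : ℝ) + 1) ^ n / ((m : ℝ) + 1) ^ (α + 2)) := by ring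
            _ = 2 * R ^ (α + 2) * ((m : ℝ) + 1) ^ p := by rw [hpowp]
  calc (∑' m : ℕ,
        (((volume : Measure ℝ).withDensity fun lam =>
            ENNReal.ofReal (laguerreL α m 0 * |lam| ^ (α + 1))).map fun lam => (lam, m))
          {lm : ℝ × ℕ | dualN α lm.1 lm.2 < R})
      ≤ ∑' m : ℕ, ENNReal.ofReal (2 * R ^ (α + 2) * ((m : ℝ) + 1) ^ p) :=
        ENNReal.tsum_le_tsum hterm
    _ = ENNReal.ofReal (∑' m : ℕ, 2 * R ^ (α + 2) * ((m : ℝ) + 1) ^ p) :=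
        (ENNReal.ofReal_tsum_of_nonneg (fun m => by positivity) (hsum.mul_left _)).symm
    _ = ENNReal.ofReal (2 * R ^ (α + 2) * S) := by rw [_root_.tsum_mul_left, ← hS]
    _ ≤ ENNReal.ofReal ((2 * S + 1) * R ^ (α + 2)) := by
        apply ENNReal.ofReal_le_ofReal; nlinarith

end LaguerreHypergroup
end
end
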